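/- arXiv:1603.07468 — 2 statements merged into one kernel-verified Lean document; each statement's English description precedes it below -/
import Mathlib

section
/- Let H be a finite-dimensional semisimple and cosemisimple Hopf algebra over an algebraically closed field k with normalized integral h ∈ H, dim H = n. For k ≥ 1, the subspace { x¹ ⊗ ⋯ ⊗ x^k ∈ H^{⊗k} : x¹ ⊗ ⋯ ⊗ x^k = h₁x¹ ⊗ h₂x² ⊗ ⋯ ⊗ h_k x^k } has dimension at most n^{k-1}. -/
set_option synthInstance.maxHeartbeats 400000
set_option maxHeartbeats 1000000


open TensorProduct

/-- Convolution product on the dual of a coalgebra. -/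
noncomputable def conv {k H : Type*} [CommSemiring k] [AddCommMonoid H] [Module k H]
    [Coalgebra k H] (f g : Module.Dual k H) : Module.Dual k H :=
  (TensorProduct.lid k k).toLinearMap ∘ₗ TensorProduct.map f g ∘ₗ Coalgebra.comul

/-- `h` is a normalized two-sided integral of the Hopf algebra `H`. -/
def IsNormIntegral (k : Type*) {H : Type*} [CommSemiring k] [Semiring H] [HopfAlgebra k H]
    (h : H) : Prop :=
  Coalgebra.counit (R := k) h = 1 ∧
    ∀ x : H, x * h = Coalgebra.counit (R := k) x • h ∧ h * x = Coalgebra.counit (R := k) x • h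

/-- `p ∈ H*` is a normalized two-sided integral of the dual Hopf algebra `H*`. -/
def IsDualNormIntegral (k : Type*) {H : Type*} [CommSemiring k] [Semiring H] [HopfAlgebra k H]
    (p : Module.Dual k H) : Prop :=
  p 1 = 1 ∧ ∀ q : Module.Dual k H, conv q p = q 1 • p ∧ conv p q = q 1 • p

/-- The tensor power `H^{⊗(n+1)}`. -/
noncomputable def Hpow (k H : Type*) [Field k] [Ring H] [HopfAlgebra k H] : ℕ → ModuleCat k
  | 0 => ModuleCat.of k H
  | n + 1 => ModuleCat.of k (H ⊗[k] (Hpow k H n))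

variable {k H : Type*} [Field k] [Ring H] [HopfAlgebra k H]

/-- The iterated coproduct `Δ_n : H → H^{⊗(n+1)}`. -/
noncomputable def Δiter : ∀ n : ℕ, H →ₗ[k] Hpow k H n
  | 0 => LinearMap.id
  | n + 1 => (TensorProduct.map LinearMap.id (Δiter n)) ∘ₗ Coalgebra.comul

/-- Componentwise multiplication `H^{⊗(n+1)} ⊗ H^{⊗(n+1)} → H^{⊗(n+1)}`. -/
noncomputable def mulPow : ∀ n : ℕ, ((Hpow k H n) ⊗[k] (Hpow k H n)) →ₗ[k] Hpow k H n
  | 0 => LinearMap.mul' k H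
  | n + 1 =>
      (TensorProduct.map (LinearMap.mul' k H) (mulPow n)) ∘ₗ
        (TensorProduct.tensorTensorTensorComm k H (Hpow k H n) H (Hpow k H n)).toLinearMap

namespace Stmt15Aux

open Coalgebra HopfAlgebra LinearMap

/-- componentwise action of `H` on `Hpow` via the iterated coproduct -/
noncomputable def act (m : ℕ) : H →ₗ[k] Hpow k H m →ₗ[k] Hpow k H m :=
  (LinearMap.llcomp k (Hpow k H m) ((Hpow k H m) ⊗[k] (Hpow k H m)) (Hpow k H m)
      (mulPow m)) ∘ₗ (TensorProduct.mk k (Hpow k H m) (Hpow k H m)) ∘ₗ Δiter m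

lemma act_apply (m : ℕ) (u : H) (c : Hpow k H m) :
    act m u c = mulPow m ((Δiter m u) ⊗ₜ c) := rfl

lemma mulPow_succ (m : ℕ) (p a : H) (w c : Hpow k H m) :
    mulPow (m+1) ((p ⊗ₜ w) ⊗ₜ (a ⊗ₜ c)) = (p*a) ⊗ₜ[k] mulPow m (w ⊗ₜ c) := by
  simp only [mulPow, LinearMap.coe_comp, LinearEquiv.coe_coe, Function.comp_apply]
  rfl

lemma act_succ (m : ℕ) (u a : H) (c : Hpow k H m) :
    act (m+1) u (a ⊗ₜ c)
      = TensorProduct.map (LinearMap.mulRight k a) ((act m).flip c) (Coalgebra.comul u) := by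
  have key : ∀ t : H ⊗[k] H,
      mulPow (m+1) ((TensorProduct.map LinearMap.id (Δiter m) t) ⊗ₜ (a ⊗ₜ c))
        = TensorProduct.map (LinearMap.mulRight k a) ((act m).flip c) t := by
    intro t
    induction t with
    | zero => exact (congrArg (mulPow (m+1)) (TensorProduct.zero_tmul _ _)).trans (map_zero _)
    | tmul p q => simp [mulPow_succ, act_apply]; rfl
    | add x y hx hy =>
      have hlin : ∀ X Y : H ⊗[k] Hpow k H m, mulPow (m+1) ((X + Y : H ⊗[k] Hpow k H m) ⊗ₜ (a ⊗ₜ c))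
          = mulPow (m+1) (X ⊗ₜ (a ⊗ₜ c)) + mulPow (m+1) (Y ⊗ₜ (a ⊗ₜ c)) := fun X Y =>
        (congrArg (mulPow (m+1)) (TensorProduct.add_tmul (M := H ⊗[k] Hpow k H m) _ _ _)).trans
          (map_add _ _ _)
      rw [map_add (TensorProduct.map (LinearMap.mulRight k a) ((act m).flip c)), ← hx, ← hy,
        map_add (TensorProduct.map LinearMap.id (Δiter m)), hlin]
      rfl
  exact key (Coalgebra.comul u)

lemma act_mul (m : ℕ) (u v : H) (c : Hpow k H m) :
    act m (u * v) c = act m u (act m v c) := by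
  induction m generalizing u v with
  | zero => exact mul_assoc u v (c : H)
  | succ m ih =>
      suffices key : ∀ c : H ⊗[k] Hpow k H m,
          act (m+1) (u*v) c = act (m+1) u (act (m+1) v c) from key c
      intro c
      induction c with
      | zero => erw [map_zero]
      | add x y hx hy => erw [map_add, map_add, map_add, hx, hy]
      | tmul a c =>
          rw [act_succ, act_succ]
          rw [Bialgebra.comul_mul]
          obtain ⟨su, lu, ru, hu⟩ := Coalgebra.Repr.arbitrary k u
          obtain ⟨sv, lv, rv, hv⟩ := Coalgebra.Repr.arbitrary k v
          rw [← hu, ← hv, Finset.sum_mul_sum]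
          simp only [Algebra.TensorProduct.tmul_mul_tmul, map_sum, TensorProduct.map_tmul]
          rw [Finset.sum_comm]
          erw [map_sum]
          refine Finset.sum_congr rfl fun j _ => ?_
          rw [act_succ, ← hu, map_sum]
          refine Finset.sum_congr rfl fun i _ => ?_
          simp only [TensorProduct.map_tmul, LinearMap.mulRight_apply, LinearMap.flip_apply]
          rw [mul_assoc, ih]


lemma tmul_assoc_mul (t : H ⊗[k] H) (s : H) :
    (LinearMap.mul' k H).lTensor H ((TensorProduct.assoc k H H H) (t ⊗ₜ s))
      = t * (1 ⊗ₜ s) := by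
  induction t with
  | zero => simp
  | tmul p q => simp [Algebra.TensorProduct.tmul_mul_tmul]
  | add x y hx hy => simp [TensorProduct.add_tmul, map_add, hx, hy, add_mul]

lemma mul_tmul_one_right (t : H ⊗[k] H) (a : H) :
    t * (a ⊗ₜ 1) = (LinearMap.mulRight k a).rTensor H t := by
  induction t with
  | zero => simp
  | tmul p q => simp [Algebra.TensorProduct.tmul_mul_tmul]
  | add x y hx hy => simp [map_add, hx, hy, add_mul]

lemma mul_one_tmul_right (t : H ⊗[k] H) (b : H) :
    t * (1 ⊗ₜ b) = (LinearMap.mulRight k b).lTensor H t := by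
  induction t with
  | zero => simp
  | tmul p q => simp [Algebra.TensorProduct.tmul_mul_tmul]
  | add x y hx hy => simp [map_add, hx, hy, add_mul]

/-- auxiliary map `p ⊗ q ↦ Δp · (1 ⊗ S q)`. -/
noncomputable def Maux : H ⊗[k] H →ₗ[k] H ⊗[k] H :=
  (LinearMap.mul' k H).lTensor H ∘ₗ (TensorProduct.assoc k H H H).toLinearMap ∘ₗ
    TensorProduct.map Coalgebra.comul (antipode (R := k))

lemma Maux_tmul (p q : H) :
    Maux (p ⊗ₜ[k] q) = Coalgebra.comul (R := k) p * (1 ⊗ₜ antipode (R := k) q) := by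
  simp only [Maux, LinearMap.coe_comp, Function.comp_apply, LinearEquiv.coe_coe,
    TensorProduct.map_tmul]
  exact tmul_assoc_mul _ _

lemma Maux_comul (a : H) : Maux (Coalgebra.comul (R := k) a) = a ⊗ₜ[k] 1 := by
  have nat0 : (TensorProduct.assoc k H H H).toLinearMap ∘ₗ
        (antipode (R := k)).lTensor (H ⊗[k] H)
      = ((antipode (R := k)).lTensor H).lTensor H ∘ₗ
        (TensorProduct.assoc k H H H).toLinearMap := by
    apply TensorProduct.ext_threefold
    intro x y z
    rfl
  have nat : ∀ x : (H ⊗[k] H) ⊗[k] H,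
      (TensorProduct.assoc k H H H) ((antipode (R := k)).lTensor (H ⊗[k] H) x)
        = ((antipode (R := k)).lTensor H).lTensor H ((TensorProduct.assoc k H H H) x) :=
    fun x => LinearMap.congr_fun nat0 x
  have step1 : TensorProduct.map (Coalgebra.comul (R := k)) (antipode (R := k))
        (Coalgebra.comul (R := k) a)
      = (antipode (R := k)).lTensor (H ⊗[k] H)
          ((Coalgebra.comul (R := k)).rTensor H (Coalgebra.comul a)) := by
    rw [← LinearMap.lTensor_comp_rTensor]; rfl
  simp only [Maux, LinearMap.coe_comp, Function.comp_apply, LinearEquiv.coe_coe]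
  rw [step1, nat, Coalgebra.coassoc_apply]
  rw [← LinearMap.comp_apply ((LinearMap.mul' k H).lTensor H), ← LinearMap.lTensor_comp]
  rw [← LinearMap.comp_apply, ← LinearMap.lTensor_comp, LinearMap.comp_assoc,
    HopfAlgebra.mul_antipode_lTensor_comul, LinearMap.lTensor_comp, LinearMap.comp_apply,
    Coalgebra.lTensor_counit_comul]
  simp

lemma counit_smul_sum (a : H) (r : Coalgebra.Repr k a (H × H)) :
    ∑ i ∈ r.index, Coalgebra.counit (R := k) (r.left i) • r.right i = a := by
  have h1 := Coalgebra.sum_counit_tmul_eq (R := k) r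
  have h2 := congrArg (TensorProduct.lid k H) h1
  rw [map_sum] at h2
  simp only [TensorProduct.lid_tmul, one_smul] at h2
  exact h2

lemma integral_move (h : H) (hh₂ : ∀ x : H, h * x = Coalgebra.counit (R := k) x • h)
    (a : H) :
    Coalgebra.comul (R := k) h * (a ⊗ₜ 1) = Coalgebra.comul (R := k) h
      * (1 ⊗ₜ antipode (R := k) a) := by
  obtain ⟨s, l, r, hr⟩ := Coalgebra.Repr.arbitrary k a
  have hM : Maux (Coalgebra.comul (R := k) a) = a ⊗ₜ[k] 1 := Maux_comul a
  rw [← hr] at hM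
  rw [← hM]
  simp only [map_sum, Maux_tmul, Finset.mul_sum]
  have key : ∀ i, Coalgebra.comul (R := k) h * (Coalgebra.comul (R := k) (l i)
        * (1 ⊗ₜ antipode (R := k) (r i)))
      = Coalgebra.counit (R := k) (l i) •
          (Coalgebra.comul (R := k) h * (1 ⊗ₜ antipode (R := k) (r i))) := by
    intro i
    rw [← mul_assoc, ← Bialgebra.comul_mul, hh₂ (l i), map_smul, smul_mul_assoc]
  simp only [key]
  have : ∑ i ∈ s, Coalgebra.counit (R := k) (l i) •
        (Coalgebra.comul (R := k) h * (1 ⊗ₜ antipode (R := k) (r i)))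
      = Coalgebra.comul (R := k) h *
          (1 ⊗ₜ antipode (R := k) (∑ i ∈ s, Coalgebra.counit (R := k) (l i) • r i)) := by
    rw [map_sum, TensorProduct.tmul_sum, Finset.mul_sum]
    refine Finset.sum_congr rfl fun i _ => ?_
    rw [map_smul, TensorProduct.tmul_smul, Algebra.mul_smul_comm]
  rw [this, counit_smul_sum a ⟨s, l, r, hr⟩]


lemma tensor_move {V : Type*} [AddCommGroup V] [Module k V]
    (h : H) (hh₂ : ∀ x : H, h * x = Coalgebra.counit (R := k) x • h)
    (a : H) (G : H →ₗ[k] V) :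
    TensorProduct.map (LinearMap.mulRight k a) G (Coalgebra.comul h)
      = TensorProduct.map LinearMap.id
          (G ∘ₗ LinearMap.mulRight k (antipode (R := k) a)) (Coalgebra.comul h) := by
  have e1 : (LinearMap.mulRight k a).rTensor H (Coalgebra.comul (R := k) h)
      = (LinearMap.mulRight k (antipode (R := k) a)).lTensor H (Coalgebra.comul h) := by
    rw [← mul_tmul_one_right, ← mul_one_tmul_right]
    exact integral_move h hh₂ a
  have A1 : ∀ x : H ⊗[k] H, TensorProduct.map (LinearMap.mulRight k a) G x
      = G.lTensor H ((LinearMap.mulRight k a).rTensor H x) := by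
    intro x
    conv_rhs => rw [← LinearMap.comp_apply, LinearMap.lTensor_comp_rTensor]
  have A2 : ∀ x : H ⊗[k] H,
      TensorProduct.map LinearMap.id (G ∘ₗ LinearMap.mulRight k (antipode (R := k) a)) x
      = G.lTensor H ((LinearMap.mulRight k (antipode (R := k) a)).lTensor H x) := by
    intro x
    rw [← LinearMap.comp_apply, ← LinearMap.lTensor_comp]
    rfl
  rw [A1, A2, e1]

/-- the map `z ↦ h₁ ⊗ (Δ(h₂) · z)` whose image contains all fixed tensors -/
noncomputable def phi (h : H) (m : ℕ) : Hpow k H m →ₗ[k] Hpow k H (m+1) :=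
  (TensorProduct.map LinearMap.id (mulPow m)) ∘ₗ
    (TensorProduct.assoc k H (Hpow k H m) (Hpow k H m)).toLinearMap ∘ₗ
    (TensorProduct.mk k (H ⊗[k] Hpow k H m) (Hpow k H m))
      ((TensorProduct.map LinearMap.id (Δiter m)) (Coalgebra.comul h))

lemma phi_apply (h : H) (m : ℕ) (z : Hpow k H m) :
    phi h m z = TensorProduct.map LinearMap.id ((act m).flip z) (Coalgebra.comul h) := by
  have key : ∀ t : H ⊗[k] H,
      (TensorProduct.map LinearMap.id (mulPow m))
        ((TensorProduct.assoc k H (Hpow k H m) (Hpow k H m))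
          ((TensorProduct.map LinearMap.id (Δiter m) t) ⊗ₜ z))
      = TensorProduct.map LinearMap.id ((act m).flip z) t := by
    intro t
    induction t with
    | zero => simp
    | tmul p q => simp [act_apply]
    | add x y hx hy => simp [TensorProduct.add_tmul, map_add, hx, hy]
  exact key _

noncomputable def Wmap (m : ℕ) : Hpow k H (m+1) →ₗ[k] Hpow k H m :=
  mulPow m ∘ₗ (TensorProduct.map (Δiter m ∘ₗ antipode (R := k)) LinearMap.id)

lemma main_id (h : H) (hh₂ : ∀ x : H, h * x = Coalgebra.counit (R := k) x • h) (m : ℕ) :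
    (act (m+1) h : Hpow k H (m+1) →ₗ[k] Hpow k H (m+1)) = phi h m ∘ₗ Wmap m := by
  apply TensorProduct.ext'
  intro a c
  erw [act_succ, tensor_move h hh₂ a ((act m).flip c)]
  have hW : Wmap m (a ⊗ₜ c) = act m (antipode (R := k) a) c := by
    show mulPow m (TensorProduct.map (Δiter m ∘ₗ antipode (R := k)) LinearMap.id (a ⊗ₜ c)) = _
    rw [TensorProduct.map_tmul]
    rfl
  have hF : ((act m).flip c ∘ₗ LinearMap.mulRight k (antipode (R := k) a))
      = (act m).flip (act m (antipode (R := k) a) c) :=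
    LinearMap.ext fun q => act_mul m q (antipode (R := k) a) c
  rw [hF, ← phi_apply]
  exact congrArg _ hW.symm

lemma fdHpow [FiniteDimensional k H] (m : ℕ) : FiniteDimensional k (Hpow k H m) := by
  induction m with
  | zero => exact ‹FiniteDimensional k H›
  | succ m ih => exact inferInstanceAs (FiniteDimensional k (H ⊗[k] Hpow k H m))

lemma finrank_Hpow [FiniteDimensional k H] (m : ℕ) :
    Module.finrank k (Hpow k H m) = Module.finrank k H ^ (m + 1) := by
  induction m with
  | zero => show Module.finrank k H = _; rw [pow_one]
  | succ m ih =>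
      haveI := fdHpow (k := k) (H := H) m
      show Module.finrank k (H ⊗[k] Hpow k H m) = _
      rw [Module.finrank_tensorProduct, ih, ← pow_succ']

end Stmt15Aux

theorem stmt15' [FiniteDimensional k H]
    (h : H) (hh₂ : ∀ x : H, h * x = Coalgebra.counit (R := k) x • h) (n : ℕ) :
    Module.finrank k
        (LinearMap.eqLocus
          ((mulPow n) ∘ₗ (TensorProduct.mk k (Hpow k H n) (Hpow k H n)) (Δiter n h))
          (LinearMap.id)) ≤
      Module.finrank k H ^ n := by
  cases n with
  | zero =>
      rw [pow_zero]
      have hle : LinearMap.eqLocus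
            ((mulPow 0) ∘ₗ (TensorProduct.mk k (Hpow k H 0) (Hpow k H 0)) (Δiter 0 h))
            (LinearMap.id (R := k) (M := Hpow k H 0))
          ≤ LinearMap.range (LinearMap.toSpanSingleton k (Hpow k H 0) h) := by
        intro x hx
        let x' : H := x
        have hx' : h * x' = x' := hx
        exact ⟨Coalgebra.counit (R := k) x', (hh₂ x').symm.trans hx'⟩
      calc Module.finrank k (LinearMap.eqLocus _ _)
          ≤ Module.finrank k (LinearMap.range (LinearMap.toSpanSingleton k (Hpow k H 0) h)) :=
            Submodule.finrank_mono hle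
        _ ≤ Module.finrank k k := LinearMap.finrank_range_le _
        _ = 1 := Module.finrank_self k
  | succ m =>
      haveI := Stmt15Aux.fdHpow (k := k) (H := H) m
      haveI := Stmt15Aux.fdHpow (k := k) (H := H) (m + 1)
      have hT : (mulPow (m+1)) ∘ₗ (TensorProduct.mk k (Hpow k H (m+1)) (Hpow k H (m+1)))
            (Δiter (m+1) h) = Stmt15Aux.act (m+1) h := rfl
      have hle : LinearMap.eqLocus
            ((mulPow (m+1)) ∘ₗ (TensorProduct.mk k (Hpow k H (m+1)) (Hpow k H (m+1)))
              (Δiter (m+1) h))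
            (LinearMap.id (R := k) (M := Hpow k H (m+1)))
          ≤ LinearMap.range (Stmt15Aux.phi h m) := by
        intro x hx
        have hx' : Stmt15Aux.act (m+1) h x = x := by rw [← hT]; exact hx
        refine ⟨Stmt15Aux.Wmap m x, ?_⟩
        have := LinearMap.congr_fun (Stmt15Aux.main_id h hh₂ m) x
        rw [hx'] at this
        exact this.symm
      calc Module.finrank k (LinearMap.eqLocus _ _)
          ≤ Module.finrank k (LinearMap.range (Stmt15Aux.phi h m)) :=
            Submodule.finrank_mono hle
        _ ≤ Module.finrank k (Hpow k H m) := LinearMap.finrank_range_le _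
        _ = Module.finrank k H ^ (m + 1) := Stmt15Aux.finrank_Hpow m

/-- The subspace of `H^{⊗(n+1)}` of tensors fixed by componentwise left multiplication by the
iterated coproduct of `h` has dimension at most `(dim H)^n`. -/
theorem stmt15 [IsAlgClosed k] [FiniteDimensional k H] [IsSemisimpleRing H]
    (hcos : ∃ p : Module.Dual k H, IsDualNormIntegral k p)
    (h : H) (hh : IsNormIntegral k h) (n : ℕ) :
    Module.finrank k
        (LinearMap.eqLocus
          ((mulPow n) ∘ₗ (TensorProduct.mk k (Hpow k H n) (Hpow k H n)) (Δiter n h))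
          (LinearMap.id)) ≤
      Module.finrank k H ^ n := by
  obtain ⟨-, hint⟩ := hh
  exact stmt15' h (fun x => (hint x).2) n
end

section
/- Let H be a finite-dimensional semisimple and cosemisimple Hopf algebra over an algebraically closed field k. In the 6-fold iterated crossed product H* ⋊ H ⋊ H* ⋊ H ⋊ H* ⋊ H (built from the actions f·a = f(a₂)a₁ and a·f = f₂(a)f₁), the elements ε ⋊ 1 ⋊ f₂ ⋊ 1 ⋊ f₁ ⋊ 1 and ε ⋊ x₁ ⋊ ε ⋊ 1 ⋊ ε ⋊ x₂ commute, for all f ∈ H* and x ∈ H. -/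
open TensorProduct

set_option maxHeartbeats 1000000

section auxiliary

lemma exists_rep {k M N : Type*} [CommSemiring k] [AddCommMonoid M] [AddCommMonoid N]
    [Module k M] [Module k N] (t : M ⊗[k] N) :
    ∃ (s : Finset ℕ) (b : ℕ → M) (b' : ℕ → N), t = ∑ m ∈ s, b m ⊗ₜ[k] b' m := by
  induction t with
  | zero => exact ⟨∅, 0, 0, by simp⟩
  | tmul a c => exact ⟨{0}, fun _ => a, fun _ => c, by simp⟩
  | add t1 t2 h1 h2 =>
    obtain ⟨s1, b1, b1', rfl⟩ := h1
    obtain ⟨s2, b2, b2', rfl⟩ := h2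
    refine ⟨s1.image (2 * ·) ∪ s2.image (2 * · + 1),
      fun m => if m % 2 = 0 then b1 (m / 2) else b2 (m / 2),
      fun m => if m % 2 = 0 then b1' (m / 2) else b2' (m / 2), ?_⟩
    rw [Finset.sum_union, Finset.sum_image (by intro a _ b _ h; have h' : 2 * a = 2 * b := h; omega),
      Finset.sum_image (by intro a _ b _ h; have h' : 2 * a + 1 = 2 * b + 1 := h; omega)]
    · simp only [Nat.mul_mod_right]
      congr 1
      · refine Finset.sum_congr rfl fun m _ => by norm_num [Nat.mul_div_cancel_left]
      · refine Finset.sum_congr rfl fun m _ => by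
          have h2 : (2 * m + 1) % 2 = 1 := by omega
          have h3 : (2 * m + 1) / 2 = m := by omega
          simp [h2, h3]
    · rw [Finset.disjoint_left]
      rintro a ha hb
      obtain ⟨p, -, rfl⟩ := Finset.mem_image.mp ha
      obtain ⟨q, -, hq⟩ := Finset.mem_image.mp hb
      omega

variable {k H : Type*} [Field k] [Ring H] [HopfAlgebra k H]

lemma sum_counit_smul {y : H} {s : Finset ℕ} {b b' : ℕ → H}
    (h : Coalgebra.comul (R := k) y = ∑ m ∈ s, b m ⊗ₜ[k] b' m) :
    ∑ m ∈ s, Coalgebra.counit (R := k) (b m) • b' m = y := by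
  have h1 := Coalgebra.rTensor_counit_comul (R := k) y
  rw [h, map_sum] at h1
  simp only [LinearMap.rTensor_tmul] at h1
  have := congrArg (TensorProduct.lid k H) h1
  simpa [map_sum] using this

lemma sum_smul_counit {y : H} {s : Finset ℕ} {b b' : ℕ → H}
    (h : Coalgebra.comul (R := k) y = ∑ m ∈ s, b m ⊗ₜ[k] b' m) :
    ∑ m ∈ s, Coalgebra.counit (R := k) (b' m) • b m = y := by
  have h1 := Coalgebra.lTensor_counit_comul (R := k) y
  rw [h, map_sum] at h1
  simp only [LinearMap.lTensor_tmul] at h1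
  have := congrArg (TensorProduct.rid k H) h1
  simpa [map_sum] using this

lemma conv_apply_rep (f g : Module.Dual k H) {y : H} {s : Finset ℕ} {b b' : ℕ → H}
    (h : Coalgebra.comul (R := k) y = ∑ m ∈ s, b m ⊗ₜ[k] b' m) :
    conv f g y = ∑ m ∈ s, f (b m) * g (b' m) := by
  simp [conv, h, map_sum, smul_eq_mul]

lemma conv_counit_left (g : Module.Dual k H) :
    conv (Coalgebra.counit (R := k)) g = g := by
  ext y
  obtain ⟨s, b, b', h⟩ := exists_rep (Coalgebra.comul (R := k) y)
  rw [conv_apply_rep _ _ h]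
  calc ∑ m ∈ s, Coalgebra.counit (R := k) (b m) * g (b' m)
      = g (∑ m ∈ s, Coalgebra.counit (R := k) (b m) • b' m) := by
        simp [map_sum, smul_eq_mul]
    _ = g y := by rw [sum_counit_smul h]

lemma conv_counit_right (g : Module.Dual k H) :
    conv g (Coalgebra.counit (R := k)) = g := by
  ext y
  obtain ⟨s, b, b', h⟩ := exists_rep (Coalgebra.comul (R := k) y)
  rw [conv_apply_rep _ _ h]
  calc ∑ m ∈ s, g (b m) * Coalgebra.counit (R := k) (b' m)
      = g (∑ m ∈ s, Coalgebra.counit (R := k) (b' m) • b m) := by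
        simp [map_sum, smul_eq_mul, mul_comm]
    _ = g y := by rw [sum_smul_counit h]

lemma conv_counit_mulRight (w : H) :
    conv (Coalgebra.counit (R := k)) ((Coalgebra.counit (R := k)) ∘ₗ LinearMap.mulRight k w)
      = Coalgebra.counit (R := k) w • Coalgebra.counit (R := k) := by
  ext y
  obtain ⟨s, b, b', h⟩ := exists_rep (Coalgebra.comul (R := k) y)
  rw [conv_apply_rep _ _ h]
  simp only [LinearMap.comp_apply, LinearMap.mulRight_apply, Bialgebra.counit_mul]
  calc ∑ m ∈ s, Coalgebra.counit (R := k) (b m) *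
        (Coalgebra.counit (R := k) (b' m) * Coalgebra.counit (R := k) w)
      = Coalgebra.counit (R := k)
          (∑ m ∈ s, Coalgebra.counit (R := k) (b m) • b' m) * Coalgebra.counit (R := k) w := by
        simp [map_sum, smul_eq_mul, Finset.sum_mul, mul_assoc]
    _ = _ := by rw [sum_counit_smul h]; simp [mul_comm]

lemma sum_tmul_transfer {k X Y Z : Type*} [CommSemiring k] [AddCommMonoid X] [AddCommMonoid Y]
    [AddCommMonoid Z] [Module k X] [Module k Y] [Module k Z]
    (φ : X →ₗ[k] Y →ₗ[k] Z) {s : Finset ℕ} {g g' : ℕ → X} {h h' : ℕ → Y}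
    (H : ∑ l ∈ s, g l ⊗ₜ[k] h l = ∑ l ∈ s, g' l ⊗ₜ[k] h' l) :
    ∑ l ∈ s, φ (g l) (h l) = ∑ l ∈ s, φ (g' l) (h' l) := by
  have := congrArg (TensorProduct.lift φ) H
  simpa [map_sum] using this

lemma dualDistrib_inj [FiniteDimensional k H] :
    Function.Injective (TensorProduct.dualDistrib k H H) := by
  have bb := Module.Free.chooseBasis k H
  intro a a' hab
  exact (TensorProduct.dualDistribEquivOfBasis bb bb).injective
    (by simpa [TensorProduct.dualDistribEquivOfBasis, LinearEquiv.ofLinear_apply] using hab)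

lemma keyC [FiniteDimensional k H] (f : Module.Dual k H) (u : Finset ℕ)
    (F1 F2 : ℕ → Module.Dual k H)
    (hF : ∀ v w : H, f (v * w) = ∑ l ∈ u, F1 l v * F2 l w) (w : H) :
    ∑ l ∈ u, (F2 l ∘ₗ LinearMap.mulLeft k w) ⊗ₜ[k] F1 l
      = ∑ l ∈ u, F2 l ⊗ₜ[k] (F1 l ∘ₗ LinearMap.mulRight k w) := by
  apply dualDistrib_inj (k := k) (H := H)
  rw [map_sum, map_sum]
  apply TensorProduct.ext'
  intro v y
  simp only [LinearMap.coe_sum, Finset.sum_apply, TensorProduct.dualDistrib_apply,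
    LinearMap.comp_apply, LinearMap.mulLeft_apply, LinearMap.mulRight_apply]
  have h1 : ∑ l ∈ u, F2 l (w * v) * F1 l y = f (y * (w * v)) := by
    rw [hF]; exact Finset.sum_congr rfl fun l _ => mul_comm _ _
  have h2 : ∑ l ∈ u, F2 l v * F1 l (y * w) = f (y * w * v) := by
    rw [hF]; exact Finset.sum_congr rfl fun l _ => mul_comm _ _
  rw [h1, h2, mul_assoc]

local notation "Big5" => ((((Module.Dual k H ⊗[k] H) ⊗[k] Module.Dual k H) ⊗[k] H) ⊗[k]
  Module.Dual k H)

noncomputable def φmap (a c : H) :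
    Module.Dual k H →ₗ[k] Module.Dual k H →ₗ[k] (Big5 ⊗[k] H) :=
  LinearMap.mk₂ k
    (fun g h => (((((Coalgebra.counit (R := k) (A := H)) ⊗ₜ[k] a) ⊗ₜ[k] g) ⊗ₜ[k] (1 : H)) ⊗ₜ[k] h)
      ⊗ₜ[k] c)
    (fun g g' h => by simp [tmul_add, add_tmul])
    (fun r g h => by simp [tmul_smul, smul_tmul'])
    (fun g h h' => by simp [tmul_add, add_tmul])
    (fun r g h => by simp [tmul_smul, smul_tmul'])

@[simp] lemma φmap_apply (a c : H) (g h : Module.Dual k H) :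
    φmap a c g h = (((((Coalgebra.counit (R := k) (A := H)) ⊗ₜ[k] a) ⊗ₜ[k] g) ⊗ₜ[k] (1 : H))
      ⊗ₜ[k] h) ⊗ₜ[k] c := rfl

lemma mulRight_add' (w w' : H) :
    LinearMap.mulRight k (w + w') = LinearMap.mulRight k w + LinearMap.mulRight k w' := by
  ext y; simp [mul_add]

lemma mulRight_smul' (r : k) (w : H) :
    LinearMap.mulRight k (r • w) = r • LinearMap.mulRight k w := by
  ext y; simp [mul_smul_comm]

noncomputable def ψmap (g2 h1 : Module.Dual k H) :
    H →ₗ[k] H →ₗ[k] H →ₗ[k] (Big5 ⊗[k] H) :=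
  LinearMap.mk₂ k
    (fun a w => TensorProduct.mk k Big5 H
      (((((Coalgebra.counit (R := k) (A := H)) ⊗ₜ[k] a) ⊗ₜ[k] g2) ⊗ₜ[k] (1 : H)) ⊗ₜ[k]
        (h1 ∘ₗ LinearMap.mulRight k w)))
    (fun a a' w => by rw [show ∀ g : Module.Dual k H,
        ((((Coalgebra.counit (R := k) (A := H)) ⊗ₜ[k] (a + a')) ⊗ₜ[k] g2) ⊗ₜ[k] (1 : H)) ⊗ₜ[k] g
        = (((((Coalgebra.counit (R := k) (A := H)) ⊗ₜ[k] a) ⊗ₜ[k] g2) ⊗ₜ[k] (1 : H)) ⊗ₜ[k] g)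
          + (((((Coalgebra.counit (R := k) (A := H)) ⊗ₜ[k] a') ⊗ₜ[k] g2) ⊗ₜ[k] (1 : H)) ⊗ₜ[k] g)
        from fun g => by simp [tmul_add, add_tmul], map_add])
    (fun r a w => by rw [show ∀ g : Module.Dual k H,
        ((((Coalgebra.counit (R := k) (A := H)) ⊗ₜ[k] (r • a)) ⊗ₜ[k] g2) ⊗ₜ[k] (1 : H)) ⊗ₜ[k] g
        = r • ((((((Coalgebra.counit (R := k) (A := H)) ⊗ₜ[k] a) ⊗ₜ[k] g2) ⊗ₜ[k] (1 : H)) ⊗ₜ[k] g))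
        from fun g => by rw [tmul_smul, ← smul_tmul', ← smul_tmul', ← smul_tmul'], map_smul])
    (fun a w w' => by
      rw [show h1 ∘ₗ LinearMap.mulRight k (w + w')
          = h1 ∘ₗ LinearMap.mulRight k w + h1 ∘ₗ LinearMap.mulRight k w' by
        rw [mulRight_add']; ext y; simp]
      rw [tmul_add, map_add])
    (fun r a w => by
      rw [show h1 ∘ₗ LinearMap.mulRight k (r • w) = r • (h1 ∘ₗ LinearMap.mulRight k w) by
        rw [mulRight_smul']; ext y; simp]
      rw [tmul_smul, map_smul])

@[simp] lemma ψmap_apply (g2 h1 : Module.Dual k H) (a w c : H) :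
    ψmap g2 h1 a w c = (((((Coalgebra.counit (R := k) (A := H)) ⊗ₜ[k] a) ⊗ₜ[k] g2) ⊗ₜ[k] (1 : H))
      ⊗ₜ[k] (h1 ∘ₗ LinearMap.mulRight k w)) ⊗ₜ[k] c := rfl

lemma transfer3 {W : Type*} [AddCommMonoid W] [Module k W]
    (χ : H →ₗ[k] H →ₗ[k] H →ₗ[k] W)
    {s : Finset ℕ} {σ τ : ℕ → Finset ℕ} {p q : ℕ → ℕ → H} {r : ℕ → H} {p' : ℕ → H}
    {q' r' : ℕ → ℕ → H}
    (hco : ∑ i ∈ s, ∑ m ∈ σ i, (p i m ⊗ₜ[k] q i m) ⊗ₜ[k] r i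
      = ∑ i ∈ s, ∑ n ∈ τ i, (p' i ⊗ₜ[k] q' i n) ⊗ₜ[k] r' i n) :
    ∑ i ∈ s, ∑ m ∈ σ i, χ (p i m) (q i m) (r i)
      = ∑ i ∈ s, ∑ n ∈ τ i, χ (p' i) (q' i n) (r' i n) := by
  have h := congrArg (TensorProduct.lift (TensorProduct.lift χ)) hco
  rw [map_sum, map_sum] at h
  calc ∑ i ∈ s, ∑ m ∈ σ i, χ (p i m) (q i m) (r i)
      = ∑ i ∈ s, TensorProduct.lift (TensorProduct.lift χ)
          (∑ m ∈ σ i, (p i m ⊗ₜ[k] q i m) ⊗ₜ[k] r i) := by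
        refine Finset.sum_congr rfl fun i _ => ?_
        rw [map_sum]
        exact Finset.sum_congr rfl fun m _ => by
          rw [TensorProduct.lift.tmul, TensorProduct.lift.tmul]
    _ = ∑ i ∈ s, TensorProduct.lift (TensorProduct.lift χ)
          (∑ n ∈ τ i, (p' i ⊗ₜ[k] q' i n) ⊗ₜ[k] r' i n) := h
    _ = ∑ i ∈ s, ∑ n ∈ τ i, χ (p' i) (q' i n) (r' i n) := by
        refine Finset.sum_congr rfl fun i _ => ?_
        rw [map_sum]
        exact Finset.sum_congr rfl fun n _ => by
          rw [TensorProduct.lift.tmul, TensorProduct.lift.tmul]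

end auxiliary

open Finset HopfAlgebra in
/-- In the 6-fold iterated crossed product `H* ⋊ H ⋊ H* ⋊ H ⋊ H* ⋊ H` (multiplication `M6`
built from the actions `f·a = f(a₂)a₁` and `a·f = f₂(a)f₁`, characterized on pure tensors via
finite Sweedler representations), the elements `ε ⋊ 1 ⋊ f₂ ⋊ 1 ⋊ f₁ ⋊ 1` and
`ε ⋊ x₁ ⋊ ε ⋊ 1 ⋊ ε ⋊ x₂` commute, for all `f ∈ H*` and `x ∈ H`. -/
theorem stmt17 {k H : Type*} [Field k] [IsAlgClosed k] [Ring H] [HopfAlgebra k H]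
    [FiniteDimensional k H] [IsSemisimpleRing H]
    (hcos : ∃ p : Module.Dual k H, IsDualNormIntegral k p)
    (M6 : (((((Module.Dual k H ⊗[k] H) ⊗[k] Module.Dual k H) ⊗[k] H) ⊗[k]
          Module.Dual k H) ⊗[k] H) →ₗ[k]
        (((((Module.Dual k H ⊗[k] H) ⊗[k] Module.Dual k H) ⊗[k] H) ⊗[k]
          Module.Dual k H) ⊗[k] H) →ₗ[k]
        (((((Module.Dual k H ⊗[k] H) ⊗[k] Module.Dual k H) ⊗[k] H) ⊗[k]
          Module.Dual k H) ⊗[k] H))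
    (hM6 : ∀ (u1 u3 u5 v1 v3 v5 : Module.Dual k H) (u2 u4 u6 v2 v4 v6 : H)
      (s1 s2 s3 s4 s5 : Finset ℕ) (a a' c c' e e' b b' d d' : ℕ → H)
      (_ : Coalgebra.comul (R := k) u2 = ∑ i ∈ s1, a i ⊗ₜ[k] a' i)
      (_ : Coalgebra.comul (R := k) u4 = ∑ j ∈ s2, c j ⊗ₜ[k] c' j)
      (_ : Coalgebra.comul (R := k) u6 = ∑ l ∈ s3, e l ⊗ₜ[k] e' l)
      (_ : Coalgebra.comul (R := k) v2 = ∑ m ∈ s4, b m ⊗ₜ[k] b' m)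
      (_ : Coalgebra.comul (R := k) v4 = ∑ n ∈ s5, d n ⊗ₜ[k] d' n),
      M6 (((((u1 ⊗ₜ[k] u2) ⊗ₜ[k] u3) ⊗ₜ[k] u4) ⊗ₜ[k] u5) ⊗ₜ[k] u6)
          (((((v1 ⊗ₜ[k] v2) ⊗ₜ[k] v3) ⊗ₜ[k] v4) ⊗ₜ[k] v5) ⊗ₜ[k] v6) =
        ∑ i ∈ s1, ∑ j ∈ s2, ∑ l ∈ s3, ∑ m ∈ s4, ∑ n ∈ s5,
          ((((conv u1 (v1 ∘ₗ LinearMap.mulRight k (a i)) ⊗ₜ[k] (a' i * b m)) ⊗ₜ[k]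
                conv (u3 ∘ₗ LinearMap.mulLeft k (b' m))
                  (v3 ∘ₗ LinearMap.mulRight k (c j))) ⊗ₜ[k] (c' j * d n)) ⊗ₜ[k]
              conv (u5 ∘ₗ LinearMap.mulLeft k (d' n))
                (v5 ∘ₗ LinearMap.mulRight k (e l))) ⊗ₜ[k] (e' l * v6)) :
    ∀ (f : Module.Dual k H) (x : H)
      (u : Finset ℕ) (F1 F2 : ℕ → Module.Dual k H)
      (_ : ∀ v w : H, f (v * w) = ∑ l ∈ u, F1 l v * F2 l w)
      (s : Finset ℕ) (x1 x2 : ℕ → H)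
      (_ : Coalgebra.comul (R := k) x = ∑ i ∈ s, x1 i ⊗ₜ[k] x2 i),
      M6 (∑ l ∈ u, (((((Coalgebra.counit (R := k) (A := H)) ⊗ₜ[k] (1 : H)) ⊗ₜ[k] F2 l) ⊗ₜ[k]
            (1 : H)) ⊗ₜ[k] F1 l) ⊗ₜ[k] (1 : H))
          (∑ i ∈ s, (((((Coalgebra.counit (R := k) (A := H)) ⊗ₜ[k] x1 i) ⊗ₜ[k]
            (Coalgebra.counit (R := k) (A := H))) ⊗ₜ[k] (1 : H)) ⊗ₜ[k]
            (Coalgebra.counit (R := k) (A := H))) ⊗ₜ[k] x2 i) =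
        M6 (∑ i ∈ s, (((((Coalgebra.counit (R := k) (A := H)) ⊗ₜ[k] x1 i) ⊗ₜ[k]
            (Coalgebra.counit (R := k) (A := H))) ⊗ₜ[k] (1 : H)) ⊗ₜ[k]
            (Coalgebra.counit (R := k) (A := H))) ⊗ₜ[k] x2 i)
          (∑ l ∈ u, (((((Coalgebra.counit (R := k) (A := H)) ⊗ₜ[k] (1 : H)) ⊗ₜ[k] F2 l) ⊗ₜ[k]
            (1 : H)) ⊗ₜ[k] F1 l) ⊗ₜ[k] (1 : H)) := by
  
  intro f x u F1 F2 hF s x1 x2 hx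
  classical
  choose σσ b b' hb using fun i : ℕ => exists_rep (Coalgebra.comul (R := k) (x1 i))
  choose ττ e e' he using fun i : ℕ => exists_rep (Coalgebra.comul (R := k) (x2 i))
  have h1 : Coalgebra.comul (R := k) (1 : H)
      = ∑ m ∈ ({0} : Finset ℕ), (fun _ : ℕ => (1 : H)) m ⊗ₜ[k] (fun _ : ℕ => (1 : H)) m := by
    simp [Algebra.TensorProduct.one_def]
  simp only [map_sum, LinearMap.sum_apply]
  -- Step 1: compute both products via hM6
  have hAB : ∀ l ∈ u, ∀ i ∈ s,
      M6 ((((((Coalgebra.counit (R := k) (A := H)) ⊗ₜ[k] (1 : H)) ⊗ₜ[k] F2 l) ⊗ₜ[k]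
            (1 : H)) ⊗ₜ[k] F1 l) ⊗ₜ[k] (1 : H))
        ((((((Coalgebra.counit (R := k) (A := H)) ⊗ₜ[k] x1 i) ⊗ₜ[k]
            (Coalgebra.counit (R := k) (A := H))) ⊗ₜ[k] (1 : H)) ⊗ₜ[k]
            (Coalgebra.counit (R := k) (A := H))) ⊗ₜ[k] x2 i)
      = ∑ m ∈ σσ i, φmap (b i m) (x2 i) (F2 l ∘ₗ LinearMap.mulLeft k (b' i m)) (F1 l) := by
    intro l _ i _
    rw [hM6 (Coalgebra.counit (R := k)) (F2 l) (F1 l) (Coalgebra.counit (R := k))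
      (Coalgebra.counit (R := k)) (Coalgebra.counit (R := k))
      1 1 1 (x1 i) 1 (x2 i)
      {0} {0} {0} (σσ i) {0}
      (fun _ => 1) (fun _ => 1) (fun _ => 1) (fun _ => 1) (fun _ => 1) (fun _ => 1)
      (b i) (b' i) (fun _ => 1) (fun _ => 1)
      h1 h1 h1 (hb i) h1]
    simp only [Finset.sum_singleton]
    refine Finset.sum_congr rfl fun m _ => ?_
    simp [LinearMap.mulRight_one, LinearMap.mulLeft_one, LinearMap.comp_id,
      conv_counit_left, conv_counit_right, one_mul, mul_one]
  have hBA : ∀ i ∈ s, ∀ l ∈ u,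
      M6 ((((((Coalgebra.counit (R := k) (A := H)) ⊗ₜ[k] x1 i) ⊗ₜ[k]
            (Coalgebra.counit (R := k) (A := H))) ⊗ₜ[k] (1 : H)) ⊗ₜ[k]
            (Coalgebra.counit (R := k) (A := H))) ⊗ₜ[k] x2 i)
        ((((((Coalgebra.counit (R := k) (A := H)) ⊗ₜ[k] (1 : H)) ⊗ₜ[k] F2 l) ⊗ₜ[k]
            (1 : H)) ⊗ₜ[k] F1 l) ⊗ₜ[k] (1 : H))
      = ∑ m ∈ σσ i, ∑ n ∈ ττ i, Coalgebra.counit (R := k) (b i m) •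
          ψmap (F2 l) (F1 l) (b' i m) (e i n) (e' i n) := by
    intro i _ l _
    rw [hM6 (Coalgebra.counit (R := k)) (Coalgebra.counit (R := k)) (Coalgebra.counit (R := k))
      (Coalgebra.counit (R := k)) (F2 l) (F1 l)
      (x1 i) 1 (x2 i) 1 1 1
      (σσ i) {0} (ττ i) {0} {0}
      (b i) (b' i) (fun _ => 1) (fun _ => 1) (e i) (e' i)
      (fun _ => 1) (fun _ => 1) (fun _ => 1) (fun _ => 1)
      (hb i) h1 (he i) h1 h1]
    simp only [Finset.sum_singleton]
    refine Finset.sum_congr rfl fun m _ => Finset.sum_congr rfl fun n _ => ?_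
    rw [conv_counit_mulRight]
    simp only [LinearMap.mulRight_one, LinearMap.mulLeft_one, LinearMap.comp_id,
      conv_counit_left, conv_counit_right, one_mul, mul_one, ψmap_apply]
    simp only [← smul_tmul']
  rw [Finset.sum_congr rfl fun i hi => Finset.sum_congr rfl fun l hl => hAB l hl i hi,
    Finset.sum_congr rfl fun l hl => Finset.sum_congr rfl fun i hi => hBA i hi l hl]
  -- Step 2: collapse the counit scalar on the right side
  have hRHS : ∀ i ∈ s, ∀ l ∈ u,
      (∑ m ∈ σσ i, ∑ n ∈ ττ i, Coalgebra.counit (R := k) (b i m) •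
          ψmap (F2 l) (F1 l) (b' i m) (e i n) (e' i n))
      = ∑ n ∈ ττ i, ψmap (F2 l) (F1 l) (x1 i) (e i n) (e' i n) := by
    intro i _ l _
    rw [Finset.sum_comm]
    refine Finset.sum_congr rfl fun n _ => ?_
    have h2 := sum_counit_smul (k := k) (hb i)
    calc ∑ m ∈ σσ i, Coalgebra.counit (R := k) (b i m) •
          ψmap (F2 l) (F1 l) (b' i m) (e i n) (e' i n)
        = ψmap (F2 l) (F1 l) (∑ m ∈ σσ i, Coalgebra.counit (R := k) (b i m) • b' i m)
            (e i n) (e' i n) := by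
          simp [map_sum, map_smul, LinearMap.sum_apply, LinearMap.smul_apply]
      _ = _ := by rw [h2]
  rw [Finset.sum_congr rfl fun l hl => Finset.sum_congr rfl fun i hi => hRHS i hi l hl]
  -- Step 3: move the multiplication across on the left side via keyC
  have hLHS : ∀ i ∈ s, ∀ m ∈ σσ i,
      (∑ l ∈ u, φmap (b i m) (x2 i) (F2 l ∘ₗ LinearMap.mulLeft k (b' i m)) (F1 l))
      = ∑ l ∈ u, ψmap (F2 l) (F1 l) (b i m) (b' i m) (x2 i) := by
    intro i _ m _
    exact sum_tmul_transfer (φmap (b i m) (x2 i)) (keyC f u F1 F2 hF (b' i m))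
  rw [Finset.sum_congr rfl fun i (hi : i ∈ s) => Finset.sum_comm (s := u) (t := σσ i)
    (f := fun l m => φmap (b i m) (x2 i) (F2 l ∘ₗ LinearMap.mulLeft k (b' i m)) (F1 l))]
  rw [Finset.sum_congr rfl fun i hi => Finset.sum_congr rfl fun m hm => hLHS i hi m hm]
  -- Step 4: coassociativity
  have hco : ∑ i ∈ s, ∑ m ∈ σσ i, (b i m ⊗ₜ[k] b' i m) ⊗ₜ[k] x2 i
      = ∑ i ∈ s, ∑ n ∈ ττ i, (x1 i ⊗ₜ[k] e i n) ⊗ₜ[k] e' i n := by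
    have hL : (Coalgebra.comul (R := k)).rTensor H (Coalgebra.comul (R := k) x)
        = ∑ i ∈ s, ∑ m ∈ σσ i, (b i m ⊗ₜ[k] b' i m) ⊗ₜ[k] x2 i := by
      rw [hx, map_sum]
      refine Finset.sum_congr rfl fun i _ => ?_
      rw [LinearMap.rTensor_tmul, hb i, TensorProduct.sum_tmul]
    have hR : (TensorProduct.assoc k H H H).symm.toLinearMap
          ((Coalgebra.comul (R := k)).lTensor H (Coalgebra.comul (R := k) x))
        = ∑ i ∈ s, ∑ n ∈ ττ i, (x1 i ⊗ₜ[k] e i n) ⊗ₜ[k] e' i n := by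
      rw [hx, map_sum, map_sum]
      refine Finset.sum_congr rfl fun i _ => ?_
      rw [LinearMap.lTensor_tmul, he i, TensorProduct.tmul_sum, map_sum]
      refine Finset.sum_congr rfl fun n _ => ?_
      show (TensorProduct.assoc k H H H).symm (x1 i ⊗ₜ[k] (e i n ⊗ₜ[k] e' i n)) = _
      rw [TensorProduct.assoc_symm_tmul]
    rw [← hL, ← hR]
    exact (Coalgebra.coassoc_symm_apply (R := k) x).symm
  -- Step 5: conclude
  rw [Finset.sum_congr rfl fun i (hi : i ∈ s) => Finset.sum_comm (s := σσ i) (t := u)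
    (f := fun m l => ψmap (F2 l) (F1 l) (b i m) (b' i m) (x2 i))]
  rw [Finset.sum_comm (s := s) (t := u)
    (f := fun i l => ∑ m ∈ σσ i, ψmap (F2 l) (F1 l) (b i m) (b' i m) (x2 i))]
  refine Finset.sum_congr rfl fun l _ => ?_
  exact transfer3 (ψmap (F2 l) (F1 l)) (s := s) (σ := σσ) (τ := ττ) (p := b) (q := b')
    (r := x2) (p' := x1) (q' := e) (r' := e') hco
end
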